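/- Let h(s) = [Γ(s)]² Γ((1-s)/α₁) Γ((1-s)/α₂) sin(p₁(1-s)π) sin(q₁(1-s)π) x^{-s} with x > 0, p₁, q₁ ∈ (0,1), and α₁, α₂ > 0. Then for every positive integer k, h has a pole of order at most 2 at s = -k, and the residue of h at s = -k equals (x^k/(k!)²) Γ((k+1)/α₁) Γ((k+1)/α₂) sin(p₁(1+k)π) sin(q₁(1+k)π) { 2ψ(k+1) − (1/α₁)ψ((k+1)/α₁) − (1/α₂)ψ((k+1)/α₂) − log x } − (π/2)(x^k/(k!)²) Γ((k+1)/α₁) Γ((k+1)/α₂) { (p₁+q₁) sin((p₁+q₁)(1+k)π) − (p₁−q₁) sin((p₁−q₁)(1+k)π) }. -/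

import Mathlib

open Real Filter

/-- The digamma function `ψ = Γ'/Γ`. -/
noncomputable def digamma (t : ℝ) : ℝ := deriv Real.Gamma t / Real.Gamma t

/-- The integrand of the Mellin–Barnes integral:
`h(s) = Γ(s)² Γ((1-s)/α₁) Γ((1-s)/α₂) sin(p₁(1-s)π) sin(q₁(1-s)π) x^{-s}`. -/
noncomputable def mbIntegrand (α₁ α₂ p₁ q₁ x : ℝ) (s : ℂ) : ℂ :=
  (Complex.Gamma s) ^ 2 * Complex.Gamma ((1 - s) / (α₁ : ℂ)) *
    Complex.Gamma ((1 - s) / (α₂ : ℂ)) *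
    Complex.sin ((p₁ : ℂ) * (1 - s) * (π : ℂ)) *
    Complex.sin ((q₁ : ℂ) * (1 - s) * (π : ℂ)) * (x : ℂ) ^ (-s)

lemma myGamma_shift (n : ℕ) (z : ℂ) (h : ∀ j ∈ Finset.range n, z + j ≠ 0) :
    Complex.Gamma (z + n) = (∏ j ∈ Finset.range n, (z + j)) * Complex.Gamma z := by
  induction n with
  | zero => simp
  | succ n ih =>
      have h1 : z + n ≠ 0 := h n (Finset.self_mem_range_succ n)
      have h2 : (z + ((n + 1 : ℕ) : ℂ)) = (z + n) + 1 := by push_cast; ring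
      rw [h2, Complex.Gamma_add_one _ h1,
        ih (fun j hj => h j (Finset.mem_range.mpr ((Finset.mem_range.mp hj).trans (Nat.lt_succ_self n)))),
        Finset.prod_range_succ]
      ring

lemma hasDerivAt_cGamma {r : ℝ} (hr : 0 < r) :
    HasDerivAt Complex.Gamma ((deriv Real.Gamma r : ℝ) : ℂ) (r : ℂ) := by
  have hne : ∀ m : ℕ, (r : ℂ) ≠ -m := by
    intro m hm
    have : r = -(m : ℝ) := by exact_mod_cast hm
    have : (0:ℝ) < -(m:ℝ) := this ▸ hr
    simp at this
    linarith [this, Nat.cast_nonneg (α := ℝ) m]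
  have h1 : DifferentiableAt ℂ Complex.Gamma (r : ℂ) := Complex.differentiableAt_Gamma _ hne
  have h2 := h1.hasDerivAt
  have h3 := h2.comp_ofReal
  have hRne : ∀ m : ℕ, r ≠ -m := by
    intro m hm; rw [hm] at hr; simp at hr; linarith [hr, Nat.cast_nonneg (α := ℝ) m]
  have h4 : HasDerivAt (fun y : ℝ => (Real.Gamma y : ℂ)) ((deriv Real.Gamma r : ℝ) : ℂ) r :=
    (Real.differentiableAt_Gamma hRne).hasDerivAt.ofReal_comp
  have h5 : (fun y : ℝ => Complex.Gamma (y : ℂ)) = fun y : ℝ => (Real.Gamma y : ℂ) :=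
    funext fun y => Complex.Gamma_ofReal y
  rw [h5] at h3
  have := h3.unique h4
  rwa [this] at h2

lemma digamma_add_one {t : ℝ} (ht : 0 < t) : digamma (t + 1) = digamma t + 1 / t := by
  have hd : ∀ m : ℕ, t ≠ -m := fun m hm => by
    rw [hm] at ht; simp at ht; linarith [ht, Nat.cast_nonneg (α := ℝ) m]
  have hG := Real.differentiableAt_Gamma hd
  have hGpos := Real.Gamma_pos_of_pos ht
  have hrec : deriv Real.Gamma (t + 1) = Real.Gamma t + t * deriv Real.Gamma t := by
    have hev : (fun y : ℝ => Real.Gamma (y + 1)) =ᶠ[nhds t] fun y => y * Real.Gamma y := by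
      filter_upwards [eventually_gt_nhds ht] with y hy using Real.Gamma_add_one hy.ne'
    have h1 : deriv (fun y : ℝ => Real.Gamma (y + 1)) t = deriv Real.Gamma (t + 1) := by
      rw [deriv_comp_add_const]
    have h2 : HasDerivAt (fun y : ℝ => y * Real.Gamma y)
        (1 * Real.Gamma t + t * deriv Real.Gamma t) t :=
      (hasDerivAt_id t).mul hG.hasDerivAt
    rw [← h1, hev.deriv_eq, h2.deriv]; ring
  unfold digamma
  rw [hrec, Real.Gamma_add_one ht.ne']
  field_simp
  ring

lemma digamma_nat (k : ℕ) :
    digamma ((k : ℝ) + 1) = deriv Real.Gamma 1 + ∑ j ∈ Finset.range k, 1 / ((j : ℝ) + 1) := by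
  induction k with
  | zero => simp [digamma, Real.Gamma_one]
  | succ n ih =>
      have h : ((n + 1 : ℕ) : ℝ) + 1 = ((n : ℝ) + 1) + 1 := by push_cast; ring
      rw [h, digamma_add_one (by positivity), ih, Finset.sum_range_succ]; ring

lemma prod_neg_nat (k : ℕ) :
    ∏ j ∈ Finset.range k, (-(k:ℂ) + j) = (-1)^k * (k.factorial : ℂ) := by
  rw [← Finset.prod_range_reflect]
  have h : ∀ j ∈ Finset.range k, (-(k:ℂ) + ((k - 1 - j : ℕ) : ℂ)) = (-1) * ((j:ℂ) + 1) := by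
    intro j hj
    have hj' : j + 1 ≤ k := Finset.mem_range.mp hj
    have h2 : k - 1 - j = k - (j + 1) := by omega
    rw [h2, Nat.cast_sub hj']
    push_cast
    ring
  rw [Finset.prod_congr rfl h, Finset.prod_mul_distrib, Finset.prod_const,
    Finset.card_range]
  congr 1
  have h3 : ∀ j ∈ Finset.range k, ((j:ℂ) + 1) = ((j + 1 : ℕ) : ℂ) := by
    intro j _; push_cast; ring
  rw [Finset.prod_congr rfl h3, ← Nat.cast_prod, Finset.prod_range_add_one_eq_factorial]

lemma sum_inv_neg_nat (k : ℕ) :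
    ∑ j ∈ Finset.range k, (-(k:ℂ) + j)⁻¹ =
      -(((∑ j ∈ Finset.range k, 1 / ((j:ℝ) + 1)) : ℝ) : ℂ) := by
  rw [← Finset.sum_range_reflect]
  have h : ∀ j ∈ Finset.range k, (-(k:ℂ) + ((k - 1 - j : ℕ) : ℂ))⁻¹ = -(((j:ℂ) + 1)⁻¹) := by
    intro j hj
    have hj' : j + 1 ≤ k := Finset.mem_range.mp hj
    have h2 : k - 1 - j = k - (j + 1) := by omega
    rw [h2, Nat.cast_sub hj']
    rw [show -(k:ℂ) + ((k:ℂ) - ((j+1:ℕ):ℂ)) = -(((j:ℂ) + 1)) by push_cast; ring]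
    rw [inv_neg]
  rw [Finset.sum_congr rfl h, Finset.sum_neg_distrib]
  push_cast
  congr 1
  apply Finset.sum_congr rfl
  intro j _
  rw [one_div, add_comm]


set_option maxHeartbeats 2000000 in
/-- At each negative integer `s = -k`, `h` has a pole of order at most 2, and its residue
(computed as `lim_{s → -k} d/ds [(s+k)² h(s)]`) has the stated closed form in terms of
Gamma, digamma and sine functions. -/
theorem mbIntegrand_residue_at_neg_int (α₁ α₂ p₁ q₁ x : ℝ) (hx : 0 < x)
    (hp₁ : p₁ ∈ Set.Ioo (0 : ℝ) 1) (hq₁ : q₁ ∈ Set.Ioo (0 : ℝ) 1)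
    (hα₁ : 0 < α₁) (hα₂ : 0 < α₂) (k : ℕ) (hk : 0 < k) :
    (∃ L : ℂ, Tendsto (fun z : ℂ => (z + (k : ℂ)) ^ 2 * mbIntegrand α₁ α₂ p₁ q₁ x z)
        (nhdsWithin (-(k : ℂ)) {(-(k : ℂ))}ᶜ) (nhds L)) ∧
    Tendsto (fun s : ℂ =>
        deriv (fun z : ℂ => (z + (k : ℂ)) ^ 2 * mbIntegrand α₁ α₂ p₁ q₁ x z) s)
      (nhdsWithin (-(k : ℂ)) {(-(k : ℂ))}ᶜ)
      (nhds (((x ^ k / ((k.factorial : ℝ)) ^ 2) *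
          Real.Gamma ((k + 1) / α₁) * Real.Gamma ((k + 1) / α₂) *
          Real.sin (p₁ * (1 + k) * π) * Real.sin (q₁ * (1 + k) * π) *
          (2 * digamma (k + 1) - (1 / α₁) * digamma ((k + 1) / α₁) -
            (1 / α₂) * digamma ((k + 1) / α₂) - Real.log x) -
        (π / 2) * (x ^ k / ((k.factorial : ℝ)) ^ 2) *
          Real.Gamma ((k + 1) / α₁) * Real.Gamma ((k + 1) / α₂) *
          ((p₁ + q₁) * Real.sin ((p₁ + q₁) * (1 + k) * π) -
            (p₁ - q₁) * Real.sin ((p₁ - q₁) * (1 + k) * π)) : ℝ) : ℂ)) := by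
  obtain ⟨hp0, hp1⟩ := hp₁
  obtain ⟨hq0, hq1⟩ := hq₁
  have hxC : (x : ℂ) ≠ 0 := Complex.ofReal_ne_zero.mpr hx.ne'
  have hkf : (k.factorial : ℝ) ≠ 0 := Nat.cast_ne_zero.mpr k.factorial_ne_zero
  set z₀ : ℂ := -(k : ℂ) with hz₀
  set P : ℂ → ℂ := fun z => ∏ j ∈ Finset.range k, (z + j) with hPdef
  set c1 : ℂ → ℂ := fun z => (Complex.Gamma (z + ((k : ℂ) + 1)) / P z) ^ 2 with hc1def
  set c2 : ℂ → ℂ := fun z => Complex.Gamma ((1 - z) / (α₁ : ℂ)) with hc2def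
  set c3 : ℂ → ℂ := fun z => Complex.Gamma ((1 - z) / (α₂ : ℂ)) with hc3def
  set c4 : ℂ → ℂ := fun z => Complex.sin ((p₁ : ℂ) * (1 - z) * (π : ℂ)) with hc4def
  set c5 : ℂ → ℂ := fun z => Complex.sin ((q₁ : ℂ) * (1 - z) * (π : ℂ)) with hc5def
  set c6 : ℂ → ℂ := fun z => (x : ℂ) ^ (-z) with hc6def
  set F : ℂ → ℂ := fun z => c1 z * c2 z * c3 z * c4 z * c5 z * c6 z with hFdef
  -- basic values
  have hr0 : P z₀ = (((-1 : ℝ) ^ k * k.factorial : ℝ) : ℂ) := by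
    simp only [hPdef, hz₀]
    rw [prod_neg_nat k]
    push_cast
    ring
  have hr0ne : P z₀ ≠ 0 := by
    rw [hr0]
    simp [hkf]
    intro h
    exact hkf (by exact_mod_cast h)
  have hzj : ∀ j ∈ Finset.range k, z₀ + (j : ℂ) ≠ 0 := by
    intro j hj h
    have : (j : ℂ) = (k : ℂ) := by rw [hz₀] at h; linear_combination h
    have hjk : j = k := Nat.cast_injective this
    have := Finset.mem_range.mp hj
    omega
  have hpt : z₀ + ((k : ℂ) + 1) = (((1 : ℝ)) : ℂ) := by
    rw [hz₀]; push_cast; ring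
  have ha1pos : 0 < ((k : ℝ) + 1) / α₁ := by positivity
  have ha2pos : 0 < ((k : ℝ) + 1) / α₂ := by positivity
  have harg1 : ((1 : ℂ) - z₀) / (α₁ : ℂ) = ((((k : ℝ) + 1) / α₁ : ℝ) : ℂ) := by
    rw [hz₀]; push_cast; ring
  have harg2 : ((1 : ℂ) - z₀) / (α₂ : ℂ) = ((((k : ℝ) + 1) / α₂ : ℝ) : ℂ) := by
    rw [hz₀]; push_cast; ring
  have hargp : (p₁ : ℂ) * (1 - z₀) * (π : ℂ) = ((p₁ * (1 + (k : ℝ)) * π : ℝ) : ℂ) := by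
    rw [hz₀]; push_cast; ring
  have hargq : (q₁ : ℂ) * (1 - z₀) * (π : ℂ) = ((q₁ * (1 + (k : ℝ)) * π : ℝ) : ℂ) := by
    rw [hz₀]; push_cast; ring
  have hxk : (x : ℂ) ^ (-z₀) = ((x ^ k : ℝ) : ℂ) := by
    rw [hz₀, neg_neg, show ((k : ℂ)) = ((k : ℕ) : ℂ) from rfl, Complex.cpow_natCast,
      Complex.ofReal_pow]
  -- derivative of P
  have hsum : ∑ j ∈ Finset.range k, (z₀ + (j : ℂ))⁻¹ =
      -(((∑ j ∈ Finset.range k, 1 / ((j : ℝ) + 1)) : ℝ) : ℂ) := by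
    rw [hz₀]; exact sum_inv_neg_nat k
  have hPd : HasDerivAt P ((((-1 : ℝ) ^ k * k.factorial : ℝ) : ℂ) *
      (-(((∑ j ∈ Finset.range k, 1 / ((j : ℝ) + 1)) : ℝ) : ℂ))) z₀ := by
    have h := HasDerivAt.fun_finsetProd (u := Finset.range k)
      (f := fun j (z : ℂ) => z + j) (f' := fun j => 1) (x := z₀)
      (fun i _ => (hasDerivAt_id z₀).add_const _)
    refine h.congr_deriv (Eq.symm ?_)
    rw [← hr0, ← hsum, Finset.mul_sum]
    apply Finset.sum_congr rfl
    intro i hi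
    have hprod := Finset.mul_prod_erase (Finset.range k) (fun j => z₀ + (j : ℂ)) hi
    have hzi := hzj i hi
    rw [smul_eq_mul, mul_one, ← div_eq_mul_inv, div_eq_iff hzi]
    simp only [hPdef]
    linear_combination -hprod
  -- derivative of Gamma (z + (k+1))
  have hGam1 : HasDerivAt (fun z : ℂ => Complex.Gamma (z + ((k : ℂ) + 1)))
      ((deriv Real.Gamma 1 : ℝ) : ℂ) z₀ := by
    have h0 := hasDerivAt_cGamma one_pos
    rw [← hpt] at h0
    have h1 := h0.comp z₀ ((hasDerivAt_id z₀).add_const ((k : ℂ) + 1))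
    simpa [Function.comp_def] using h1
  have hkfC : (k.factorial : ℂ) ≠ 0 := Nat.cast_ne_zero.mpr k.factorial_ne_zero
  have hcases : ((-1 : ℂ)) ^ k = 1 ∨ ((-1 : ℂ)) ^ k = -1 := by
    rcases Nat.even_or_odd k with h | h
    · left; exact h.neg_one_pow
    · right; exact h.neg_one_pow
  -- quotient G and c1
  have hGq : HasDerivAt (fun z => Complex.Gamma (z + ((k : ℂ) + 1)) / P z)
      ((((deriv Real.Gamma 1 + ∑ j ∈ Finset.range k, 1 / ((j : ℝ) + 1)) /
        ((-1 : ℝ) ^ k * k.factorial) : ℝ) : ℂ)) z₀ := by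
    have h := hGam1.div hPd hr0ne
    refine h.congr_deriv (Eq.symm ?_)
    rw [hr0, hpt, Complex.Gamma_ofReal, Real.Gamma_one]
    push_cast
    rcases hcases with hc | hc <;> rw [hc] <;> field_simp [hkfC] <;> (first | ring | simp)
  have hGqv : Complex.Gamma (z₀ + ((k : ℂ) + 1)) / P z₀ =
      (((1 / ((-1 : ℝ) ^ k * k.factorial) : ℝ)) : ℂ) := by
    rw [hr0, hpt, Complex.Gamma_ofReal, Real.Gamma_one]
    push_cast
    ring
  have hc1 : HasDerivAt c1
      (((2 * (deriv Real.Gamma 1 + ∑ j ∈ Finset.range k, 1 / ((j : ℝ) + 1)) /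
        (k.factorial : ℝ) ^ 2 : ℝ)) : ℂ) z₀ := by
    have h := hGq.pow 2
    rw [hc1def]
    refine h.congr_deriv (Eq.symm ?_)
    rw [hGqv]
    have hne : ((-1 : ℝ) ^ k * k.factorial) ≠ 0 := by
      intro h'
      rcases mul_eq_zero.mp h' with h'' | h''
      · exact absurd h'' (pow_ne_zero _ (by norm_num))
      · exact hkf h''
    push_cast
    rcases hcases with hc | hc <;> rw [hc] <;> field_simp [hkfC]
    all_goals (left; ring)
  -- c2 c3
  have hα₁C : (α₁ : ℂ) ≠ 0 := Complex.ofReal_ne_zero.mpr hα₁.ne'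
  have hα₂C : (α₂ : ℂ) ≠ 0 := Complex.ofReal_ne_zero.mpr hα₂.ne'
  have hGam2 : HasDerivAt c2 ((-(deriv Real.Gamma (((k:ℝ)+1)/α₁) / α₁) : ℝ) : ℂ) z₀ := by
    rw [hc2def]
    have hinner : HasDerivAt (fun z : ℂ => (1 - z) / (α₁:ℂ)) (-1 / (α₁:ℂ)) z₀ :=
      ((hasDerivAt_id z₀).const_sub 1).div_const _
    have h0 := hasDerivAt_cGamma ha1pos
    rw [← harg1] at h0
    have h := h0.comp z₀ hinner
    simp only [Function.comp_def] at h
    refine h.congr_deriv (Eq.symm ?_)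
    push_cast
    field_simp
  have hGam3 : HasDerivAt c3 ((-(deriv Real.Gamma (((k:ℝ)+1)/α₂) / α₂) : ℝ) : ℂ) z₀ := by
    rw [hc3def]
    have hinner : HasDerivAt (fun z : ℂ => (1 - z) / (α₂:ℂ)) (-1 / (α₂:ℂ)) z₀ :=
      ((hasDerivAt_id z₀).const_sub 1).div_const _
    have h0 := hasDerivAt_cGamma ha2pos
    rw [← harg2] at h0
    have h := h0.comp z₀ hinner
    simp only [Function.comp_def] at h
    refine h.congr_deriv (Eq.symm ?_)
    push_cast
    field_simp
  -- sines
  have hsin1 : HasDerivAt c4 ((-(p₁ * π * Real.cos (p₁*(1+(k:ℝ))*π)) : ℝ) : ℂ) z₀ := by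
    rw [hc4def]
    have hinner : HasDerivAt (fun z : ℂ => (p₁:ℂ) * (1 - z) * (π:ℂ)) ((p₁:ℂ) * (-1) * (π:ℂ)) z₀ :=
      (((hasDerivAt_id z₀).const_sub 1).const_mul _).mul_const _
    have h := (Complex.hasDerivAt_sin ((p₁:ℂ) * (1 - z₀) * (π:ℂ))).comp z₀ hinner
    simp only [Function.comp_def] at h
    refine h.congr_deriv (Eq.symm ?_)
    rw [hargp, ← Complex.ofReal_cos]
    push_cast
    ring
  have hsin2 : HasDerivAt c5 ((-(q₁ * π * Real.cos (q₁*(1+(k:ℝ))*π)) : ℝ) : ℂ) z₀ := by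
    rw [hc5def]
    have hinner : HasDerivAt (fun z : ℂ => (q₁:ℂ) * (1 - z) * (π:ℂ)) ((q₁:ℂ) * (-1) * (π:ℂ)) z₀ :=
      (((hasDerivAt_id z₀).const_sub 1).const_mul _).mul_const _
    have h := (Complex.hasDerivAt_sin ((q₁:ℂ) * (1 - z₀) * (π:ℂ))).comp z₀ hinner
    simp only [Function.comp_def] at h
    refine h.congr_deriv (Eq.symm ?_)
    rw [hargq, ← Complex.ofReal_cos]
    push_cast
    ring
  -- cpow
  have hc6d : HasDerivAt c6 ((-(x^k * Real.log x) : ℝ) : ℂ) z₀ := by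
    rw [hc6def]
    have h := ((hasDerivAt_id z₀).neg).const_cpow (c := (x:ℂ)) (Or.inl hxC)
    simp only [Pi.neg_apply, id_eq] at h
    refine h.congr_deriv (Eq.symm ?_)
    rw [hxk, ← Complex.ofReal_log hx.le]
    push_cast
    ring
  -- values at z₀
  have hv1 : c1 z₀ = ((1/(k.factorial : ℝ)^2 : ℝ) : ℂ) := by
    simp only [hc1def]
    rw [hGqv]
    push_cast
    rcases hcases with hc | hc <;> rw [hc] <;> field_simp
  have hv2 : c2 z₀ = ((Real.Gamma (((k:ℝ)+1)/α₁) : ℝ) : ℂ) := by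
    simp only [hc2def]; rw [harg1, Complex.Gamma_ofReal]
  have hv3 : c3 z₀ = ((Real.Gamma (((k:ℝ)+1)/α₂) : ℝ) : ℂ) := by
    simp only [hc3def]; rw [harg2, Complex.Gamma_ofReal]
  have hv4 : c4 z₀ = ((Real.sin (p₁*(1+(k:ℝ))*π) : ℝ) : ℂ) := by
    simp only [hc4def]; rw [hargp, ← Complex.ofReal_sin]
  have hv5 : c5 z₀ = ((Real.sin (q₁*(1+(k:ℝ))*π) : ℝ) : ℂ) := by
    simp only [hc5def]; rw [hargq, ← Complex.ofReal_sin]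
  have hv6 : c6 z₀ = ((x^k : ℝ) : ℂ) := by
    simp only [hc6def]; exact hxk
  -- full derivative
  have hFd := ((((hc1.mul hGam2).mul hGam3).mul hsin1).mul hsin2).mul hc6d
  -- differentiability on an open set
  have hPcont : Continuous P := by
    simp only [hPdef]
    exact continuous_finset_prod _ (fun i _ => continuous_id.add continuous_const)
  set W : Set ℂ := {z | P z ≠ 0 ∧ 0 < (z + ((k:ℂ)+1)).re ∧
      0 < (((1:ℂ) - z)/(α₁:ℂ)).re ∧ 0 < (((1:ℂ) - z)/(α₂:ℂ)).re} with hWdef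
  have hWopen : IsOpen W := by
    rw [hWdef]
    apply IsOpen.and
    · exact (isOpen_compl_singleton).preimage hPcont
    apply IsOpen.and
    · exact isOpen_lt continuous_const
        (Complex.continuous_re.comp (continuous_id.add continuous_const))
    apply IsOpen.and
    · exact isOpen_lt continuous_const
        (Complex.continuous_re.comp ((continuous_const.sub continuous_id).div_const _))
    · exact isOpen_lt continuous_const
        (Complex.continuous_re.comp ((continuous_const.sub continuous_id).div_const _))
  have hz₀W : z₀ ∈ W := by
    refine ⟨hr0ne, ?_, ?_, ?_⟩
    · rw [hpt]; norm_num
    · rw [harg1, Complex.ofReal_re]; exact ha1pos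
    · rw [harg2, Complex.ofReal_re]; exact ha2pos
  have hne_of_re : ∀ s : ℂ, 0 < s.re → ∀ m : ℕ, s ≠ -(m:ℂ) := by
    intro s hs m h
    rw [h] at hs
    simp only [Complex.neg_re, Complex.natCast_re] at hs
    have := Nat.cast_nonneg (α := ℝ) m
    linarith
  have hFdiffOn : DifferentiableOn ℂ F W := by
    intro w hw
    obtain ⟨hw1, hw2, hw3, hw4⟩ := hw
    apply DifferentiableAt.differentiableWithinAt
    have d1 : DifferentiableAt ℂ (fun z => Complex.Gamma (z + ((k:ℂ)+1))) w := by
      have := (Complex.differentiableAt_Gamma _ (hne_of_re _ hw2)).comp w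
        (differentiableAt_id.add_const ((k:ℂ)+1))
      simpa [Function.comp_def] using this
    have dP : DifferentiableAt ℂ P w := by
      have := (HasDerivAt.fun_finsetProd (u := Finset.range k) (f := fun j (z:ℂ) => z + j)
        (f' := fun j => 1) (x := w) (fun i _ => (hasDerivAt_id w).add_const _)).differentiableAt
      exact this
    have d2 : DifferentiableAt ℂ c2 w := by
      rw [hc2def]
      have := (Complex.differentiableAt_Gamma _ (hne_of_re _ hw3)).comp w
        (((differentiableAt_const (1:ℂ)).sub differentiableAt_id).div_const _)
      simpa [Function.comp_def] using this
    have d3 : DifferentiableAt ℂ c3 w := by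
      rw [hc3def]
      have := (Complex.differentiableAt_Gamma _ (hne_of_re _ hw4)).comp w
        (((differentiableAt_const (1:ℂ)).sub differentiableAt_id).div_const _)
      simpa [Function.comp_def] using this
    have d4 : DifferentiableAt ℂ c4 w := by
      rw [hc4def]
      have := (Complex.differentiable_sin.differentiableAt).comp w
        ((((differentiableAt_const (1:ℂ)).sub differentiableAt_id).const_mul ((p₁:ℂ))).mul_const ((π:ℂ)))
      simpa [Function.comp_def] using this
    have d5 : DifferentiableAt ℂ c5 w := by
      rw [hc5def]
      have := (Complex.differentiable_sin.differentiableAt).comp w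
        ((((differentiableAt_const (1:ℂ)).sub differentiableAt_id).const_mul ((q₁:ℂ))).mul_const ((π:ℂ)))
      simpa [Function.comp_def] using this
    have d6 : DifferentiableAt ℂ c6 w := by
      rw [hc6def]
      exact differentiableAt_id.neg.const_cpow (Or.inl hxC)
    rw [hFdef, hc1def]
    exact ((((((d1.div dP hw1).pow 2).mul d2).mul d3).mul d4).mul d5).mul d6
  -- the punctured-neighborhood equality
  have hUopen : IsOpen ({z : ℂ | P z ≠ 0} ∩ {z₀}ᶜ) :=
    ((isOpen_compl_singleton).preimage hPcont).inter isOpen_compl_singleton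
  have hUmem : ({z : ℂ | P z ≠ 0} ∩ {z₀}ᶜ) ∈ nhdsWithin z₀ {z₀}ᶜ :=
    Filter.inter_mem
      (mem_nhdsWithin_of_mem_nhds
        (((isOpen_compl_singleton).preimage hPcont).mem_nhds hr0ne))
      self_mem_nhdsWithin
  have heq : ∀ z : ℂ, P z ≠ 0 → z ≠ z₀ →
      (z + (k:ℂ))^2 * mbIntegrand α₁ α₂ p₁ q₁ x z = F z := by
    intro z hPz hz
    have hzk : z + (k:ℂ) ≠ 0 := by
      intro h; apply hz; rw [hz₀]; linear_combination h
    have hall : ∀ j ∈ Finset.range (k+1), z + (j:ℂ) ≠ 0 := by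
      intro j hj
      rcases Nat.lt_succ_iff_lt_or_eq.mp (Finset.mem_range.mp hj) with h | h
      · have hPz' : ∏ j ∈ Finset.range k, (z + (j:ℂ)) ≠ 0 := by
          simpa [hPdef] using hPz
        exact Finset.prod_ne_zero_iff.mp hPz' j (Finset.mem_range.mpr h)
      · rw [h]; exact hzk
    have key := myGamma_shift (k+1) z hall
    rw [Finset.prod_range_succ] at key
    have hGz : Complex.Gamma (z + ((k:ℂ)+1)) / P z = (z + (k:ℂ)) * Complex.Gamma z := by
      rw [show ((k:ℂ)+1) = ((k+1 : ℕ) : ℂ) from by push_cast; ring, key]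
      simp only [hPdef]
      field_simp [show (∏ x ∈ Finset.range k, (z + (x:ℂ))) ≠ 0 from hPz]
    simp only [hFdef, hc1def, hc2def, hc3def, hc4def, hc5def, hc6def, mbIntegrand]
    rw [hGz]
    ring
  have hFcont : ContinuousAt F z₀ := by
    rw [hFdef]
    exact hFd.differentiableAt.continuousAt
  constructor
  · exact ⟨F z₀, Filter.Tendsto.congr'
      (Filter.eventually_of_mem hUmem (fun z hz => (heq z hz.1 hz.2).symm))
      (hFcont.continuousWithinAt.tendsto)⟩
  · have hder_eq : (fun s => deriv (fun z : ℂ => (z + (k:ℂ))^2 * mbIntegrand α₁ α₂ p₁ q₁ x z) s)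
        =ᶠ[nhdsWithin z₀ {z₀}ᶜ] deriv F :=
      Filter.eventually_of_mem hUmem (fun z hz =>
        Filter.EventuallyEq.deriv_eq
          (Filter.eventually_of_mem (hUopen.mem_nhds hz) (fun w hw => heq w hw.1 hw.2)))
    apply Filter.Tendsto.congr' hder_eq.symm
    have hcont2 : ContinuousAt (deriv F) z₀ :=
      ((hFdiffOn.analyticOnNhd hWopen).deriv z₀ hz₀W).continuousAt
    have ht := hcont2.tendsto.mono_left (nhdsWithin_le_nhds (s := {z₀}ᶜ))
    convert ht using 2
    rw [hFdef]
    rw [show (fun z => c1 z * c2 z * c3 z * c4 z * c5 z * c6 z) = c1 * c2 * c3 * c4 * c5 * c6 from rfl, hFd.deriv]; simp only [Pi.mul_apply]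
    rw [hv1, hv2, hv3, hv4, hv5, hv6]
    rw [digamma_nat k]
    simp only [digamma]
    rw [show (p₁+q₁)*(1+(k:ℝ))*π = p₁*(1+(k:ℝ))*π + q₁*(1+(k:ℝ))*π from by ring,
      show (p₁-q₁)*(1+(k:ℝ))*π = p₁*(1+(k:ℝ))*π - q₁*(1+(k:ℝ))*π from by ring,
      Real.sin_add, Real.sin_sub]
    have hG1 : Real.Gamma (((k:ℝ)+1)/α₁) ≠ 0 := (Real.Gamma_pos_of_pos ha1pos).ne'
    have hG2 : Real.Gamma (((k:ℝ)+1)/α₂) ≠ 0 := (Real.Gamma_pos_of_pos ha2pos).ne'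
    norm_cast
    field_simp
    ring
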